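/- arXiv:1210.5111 — 4 statements merged into one kernel-verified Lean document; each statement's English description precedes it below -/
import Mathlib

section
/- Let T̃ > 0 and C > 0 be real numbers. For each natural number n ≥ 1 define g_n(x) = x·T̃ − ln x − (n−1)·ln(1+x) for x > 0, x*_n = (√((T̃−n)² + 4T̃) + n − T̃)/(2T̃), and U*_n = C·exp(g_n(x*_n)). Then for every δ with 0 < δ < 1, the sequence U*_n · n^(δ·n) tends to 0 as n → ∞; in particular U*_n = O(n^(−δ·n)), i.e. the convergence rate of U*_n to zero is super-geometric. -/
open Real Filter

theorem stmt_1 (T C : ℝ) (hT : 0 < T) (hC : 0 < C)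
    (g : ℕ → ℝ → ℝ)
    (hg : ∀ n : ℕ, ∀ x : ℝ, g n x = x * T - Real.log x - (n - 1 : ℝ) * Real.log (1 + x))
    (xs : ℕ → ℝ)
    (hxs : ∀ n : ℕ, xs n = (Real.sqrt ((T - n) ^ 2 + 4 * T) + n - T) / (2 * T))
    (U : ℕ → ℝ) (hU : ∀ n : ℕ, U n = C * Real.exp (g n (xs n)))
    (δ : ℝ) (hδ0 : 0 < δ) (hδ1 : δ < 1) :
    Filter.Tendsto (fun n : ℕ => U n * (n : ℝ) ^ (δ * n)) Filter.atTop (nhds 0) := by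
  set K : ℝ := 1 + Real.log (2 * T) with hKdef
  set b : ℕ → ℝ := fun n => (n : ℝ) * K + Real.sqrt T - (1 - δ) * n * Real.log n with hbdef
  have h2T : (0:ℝ) < 2 * T := by linarith
  -- b tends to -infinity
  have hlog : Tendsto (fun n : ℕ => Real.log n) atTop atTop :=
    Real.tendsto_log_atTop.comp tendsto_natCast_atTop_atTop
  have hbbot : Tendsto b atTop atBot := by
    have haux : Tendsto (fun n : ℕ => Real.sqrt T - (n : ℝ)) atTop atBot := by
      have h1 : Tendsto (fun n : ℕ => -(n : ℝ)) atTop atBot :=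
        tendsto_neg_atBot_iff.mpr tendsto_natCast_atTop_atTop
      simpa [sub_eq_add_neg] using tendsto_atBot_add_const_left atTop (Real.sqrt T) h1
    apply tendsto_atBot_mono' atTop _ haux
    filter_upwards [hlog.eventually_ge_atTop ((K + 1) / (1 - δ)), eventually_ge_atTop 1]
      with n hln hn1
    have hn0 : (0:ℝ) ≤ (n : ℝ) := Nat.cast_nonneg n
    have h1δ : (0:ℝ) < 1 - δ := by linarith
    have : K + 1 ≤ (1 - δ) * Real.log n := by
      rw [div_le_iff₀ h1δ] at hln; linarith [hln]
    have h2 : (n : ℝ) * (K + 1) ≤ (n : ℝ) * ((1 - δ) * Real.log n) :=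
      mul_le_mul_of_nonneg_left this hn0
    simp only [hbdef]
    nlinarith [h2]
  -- limit function
  have hlim : Tendsto (fun n : ℕ => C * Real.exp (b n)) atTop (nhds 0) := by
    have := (Real.tendsto_exp_atBot.comp hbbot).const_mul C
    simpa using this
  apply squeeze_zero' (g := fun n : ℕ => C * Real.exp (b n))
  · filter_upwards with n
    have : 0 < U n := by rw [hU]; positivity
    positivity
  · filter_upwards [eventually_ge_atTop 1, tendsto_natCast_atTop_atTop.eventually_ge_atTop (2 * T)]
      with n hn1 hn2T
    have hn0 : (0:ℝ) < (n : ℝ) := by exact_mod_cast hn1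
    have hnT : T < (n : ℝ) := by linarith
    set s : ℝ := Real.sqrt ((T - n) ^ 2 + 4 * T) with hsdef
    have hsnn : 0 ≤ s := Real.sqrt_nonneg _
    have hs2 : s ^ 2 = (T - n) ^ 2 + 4 * T := Real.sq_sqrt (by positivity)
    have hslb : (n : ℝ) - T ≤ s := by
      have h1 : Real.sqrt ((T - n) ^ 2) ≤ s := Real.sqrt_le_sqrt (by nlinarith)
      rw [Real.sqrt_sq_eq_abs] at h1
      calc (n : ℝ) - T = -(T - n) := by ring
        _ ≤ |T - (n:ℝ)| := neg_le_abs _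
        _ ≤ s := h1
    have hsub : s ≤ (n : ℝ) - T + 2 * Real.sqrt T := by
      have hrn : (0:ℝ) ≤ (n : ℝ) - T + 2 * Real.sqrt T := by
        have := Real.sqrt_nonneg T; linarith
      nlinarith [Real.sq_sqrt hT.le, Real.sqrt_nonneg T, hs2, hsnn]
    set x : ℝ := xs n with hxdef
    have hxeq : x = (s + n - T) / (2 * T) := by rw [hxdef, hxs]
    have hxlb : (n : ℝ) / (2 * T) ≤ x := by
      rw [hxeq]
      exact (div_le_div_iff_of_pos_right h2T).mpr (by linarith)
    have hx0 : 0 < x := lt_of_lt_of_le (by positivity) hxlb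
    have hxT : x * T ≤ (n : ℝ) + Real.sqrt T := by
      have : x * T = (s + n - T) / 2 := by rw [hxeq]; field_simp
      rw [this]
      have := Real.sqrt_nonneg T
      linarith
    -- logarithm bounds
    have hlogx : Real.log ((n : ℝ) / (2 * T)) ≤ Real.log x :=
      Real.log_le_log (by positivity) hxlb
    have hlogdiv : Real.log ((n : ℝ) / (2 * T)) = Real.log n - Real.log (2 * T) :=
      Real.log_div (ne_of_gt hn0) (ne_of_gt h2T)
    have hlog1x : Real.log x ≤ Real.log (1 + x) :=
      Real.log_le_log hx0 (by linarith)
    have hn1' : (1:ℝ) ≤ (n : ℝ) := by exact_mod_cast hn1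
    -- bound on g
    have hgb : g n x ≤ x * T - (n : ℝ) * Real.log x := by
      rw [hg]
      have h1 : ((n : ℝ) - 1) * Real.log x ≤ ((n : ℝ) - 1) * Real.log (1 + x) :=
        mul_le_mul_of_nonneg_left hlog1x (by linarith)
      linarith
    have hlogx' : Real.log n - Real.log (2 * T) ≤ Real.log x := by
      rw [← hlogdiv]; exact hlogx
    have hkey : g n x + Real.log n * (δ * n) ≤ b n := by
      have h2 : (n : ℝ) * (Real.log n - Real.log (2 * T)) ≤ (n : ℝ) * Real.log x :=
        mul_le_mul_of_nonneg_left hlogx' hn0.le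
      simp only [hbdef, hKdef]
      nlinarith [hgb, hxT, h2]
    -- conclude
    have hterm : U n * (n : ℝ) ^ (δ * n) = C * Real.exp (g n x + Real.log n * (δ * n)) := by
      rw [hU, Real.rpow_def_of_pos hn0, Real.exp_add, ← hxdef, mul_assoc]
    rw [hterm]
    have := Real.exp_le_exp.mpr hkey
    exact mul_le_mul_of_nonneg_left this hC.le
  · exact hlim
end

section
/- Let α < 0, β > 0 and t, T be real numbers with t + 1 ≤ T. For s ∈ (t, T] set ν_s = √(β²·(1 − e^{2α(s−t)})/(2|α|)). Then ∫_t^T (1/ν_s) ds ≤ 3·√(2|α|/(β²·(1 − e^{2α})))·(T − t). -/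
theorem stmt_8 (α β t T : ℝ) (hα : α < 0) (hβ : 0 < β) (htT : t + 1 ≤ T)
    (ν : ℝ → ℝ)
    (hν : ∀ s : ℝ, ν s = Real.sqrt (β ^ 2 * (1 - Real.exp (2 * α * (s - t))) / (2 * |α|))) :
    (∫ s in t..T, 1 / ν s) ≤
      3 * Real.sqrt (2 * |α| / (β ^ 2 * (1 - Real.exp (2 * α)))) * (T - t) := by
  set C : ℝ := Real.sqrt (2 * |α| / (β ^ 2 * (1 - Real.exp (2 * α)))) with hC
  have hle : t ≤ T := by linarith
  have hC0 : 0 ≤ C := Real.sqrt_nonneg _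
  have hαabs : |α| = -α := abs_of_neg hα
  have hA : 0 < 1 - Real.exp (2 * α) := by
    have : Real.exp (2 * α) < 1 := Real.exp_lt_one_iff.mpr (by linarith)
    linarith
  have hβ2 : 0 < β ^ 2 := by positivity
  have hαpos : 0 < 2 * |α| := by rw [hαabs]; linarith
  -- the majorant
  set g : ℝ → ℝ := fun s => C * ((s - t) ^ (-(1/2) : ℝ) + 1) with hg
  -- integrability of g on [t, T]
  have hrpow : IntervalIntegrable (fun s : ℝ => (s - t) ^ (-(1/2) : ℝ)) MeasureTheory.volume t T := by
    have h0 : IntervalIntegrable (fun x : ℝ => x ^ (-(1/2) : ℝ)) MeasureTheory.volume 0 (T - t) :=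
      intervalIntegral.intervalIntegrable_rpow' (by norm_num)
    have := h0.comp_sub_right t
    simpa using this
  have hgint : IntervalIntegrable g MeasureTheory.volume t T := by
    exact (hrpow.add intervalIntegrable_const).const_mul C
  -- pointwise bound on Ioc t T
  have hbound : ∀ s ∈ Set.Ioc t T, 1 / ν s ≤ g s := by
    intro s hs
    set u : ℝ := s - t with hu
    have hu0 : 0 < u := by simp only [hu]; linarith [hs.1]
    have hAu : 0 < 1 - Real.exp (2 * α * u) := by
      have : Real.exp (2 * α * u) < 1 := Real.exp_lt_one_iff.mpr (by nlinarith)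
      linarith
    have h1ν : 1 / ν s = Real.sqrt (2 * |α| / (β ^ 2 * (1 - Real.exp (2 * α * u)))) := by
      rw [hν, one_div, ← Real.sqrt_inv]
      congr 1
      field_simp
      rw [← hu, mul_div_assoc, div_self hAu.ne', mul_one]
    have hrpow_nonneg : (0:ℝ) ≤ u ^ (-(1/2) : ℝ) := Real.rpow_nonneg hu0.le _
    rcases le_or_gt u 1 with hu1 | hu1
    · -- convexity: exp(2αu) ≤ (1-u) + u exp(2α)
      have hconv : Real.exp (2 * α * u) ≤ (1 - u) + u * Real.exp (2 * α) := by
        have := convexOn_exp.2 (Set.mem_univ (0:ℝ)) (Set.mem_univ (2*α))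
          (by linarith : (0:ℝ) ≤ 1 - u) hu0.le (by ring)
        simpa [smul_eq_mul, Real.exp_zero, mul_comm] using this
      have hkey : u * (1 - Real.exp (2 * α)) ≤ 1 - Real.exp (2 * α * u) := by nlinarith
      have hpos : 0 < β ^ 2 * (u * (1 - Real.exp (2 * α))) := by positivity
      have hmono : 2 * |α| / (β ^ 2 * (1 - Real.exp (2 * α * u))) ≤
          2 * |α| / (β ^ 2 * (u * (1 - Real.exp (2 * α)))) := by
        apply div_le_div_of_nonneg_left hαpos.le (by positivity) (by nlinarith)
      have hsplit : 2 * |α| / (β ^ 2 * (u * (1 - Real.exp (2 * α)))) =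
          (2 * |α| / (β ^ 2 * (1 - Real.exp (2 * α)))) * u⁻¹ := by
        rw [show β ^ 2 * (u * (1 - Real.exp (2 * α))) =
            (β ^ 2 * (1 - Real.exp (2 * α))) * u from by ring, ← div_div, div_eq_mul_inv]
      have hsqeq : Real.sqrt ((2 * |α| / (β ^ 2 * (1 - Real.exp (2 * α)))) * u⁻¹)
          = C * u ^ (-(1/2) : ℝ) := by
        rw [Real.sqrt_mul (by positivity), hC]
        congr 1
        rw [Real.sqrt_inv, Real.sqrt_eq_rpow, ← Real.rpow_neg hu0.le]
      calc 1 / ν s ≤ Real.sqrt (2 * |α| / (β ^ 2 * (u * (1 - Real.exp (2 * α))))) := by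
              rw [h1ν]; exact Real.sqrt_le_sqrt hmono
        _ = C * u ^ (-(1/2) : ℝ) := by rw [hsplit, hsqeq]
        _ ≤ g s := by simp only [hg, ← hu]; nlinarith
    · -- u ≥ 1 : 1 - exp(2αu) ≥ 1 - exp(2α)
      have hkey : 1 - Real.exp (2 * α) ≤ 1 - Real.exp (2 * α * u) := by
        have : Real.exp (2 * α * u) ≤ Real.exp (2 * α) :=
          Real.exp_le_exp.mpr (by nlinarith)
        linarith
      have hmono : 2 * |α| / (β ^ 2 * (1 - Real.exp (2 * α * u))) ≤
          2 * |α| / (β ^ 2 * (1 - Real.exp (2 * α))) := by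
        apply div_le_div_of_nonneg_left hαpos.le (by positivity) (by nlinarith)
      have : 1 / ν s ≤ C := by rw [h1ν, hC]; exact Real.sqrt_le_sqrt hmono
      calc 1 / ν s ≤ C := this
        _ ≤ g s := by simp only [hg, ← hu]; nlinarith
  -- nonnegativity of 1/ν
  have hnonneg : ∀ s ∈ Set.Ioc t T, 0 ≤ 1 / ν s := by
    intro s _
    rw [hν]
    positivity
  -- compare integrals
  have hmain : (∫ s in t..T, 1 / ν s) ≤ ∫ s in t..T, g s := by
    rw [intervalIntegral.integral_of_le hle, intervalIntegral.integral_of_le hle]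
    apply MeasureTheory.integral_mono_of_nonneg
    · filter_upwards [MeasureTheory.ae_restrict_mem measurableSet_Ioc] with s hs
      exact hnonneg s hs
    · exact (intervalIntegrable_iff_integrableOn_Ioc_of_le hle).mp hgint
    · filter_upwards [MeasureTheory.ae_restrict_mem measurableSet_Ioc] with s hs
      exact hbound s hs
  -- compute integral of g
  have hcomp : (∫ s in t..T, (s - t) ^ (-(1/2) : ℝ)) = 2 * (T - t) ^ ((1:ℝ)/2) := by
    rw [intervalIntegral.integral_comp_sub_right (fun x : ℝ => x ^ (-(1/2) : ℝ)) t]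
    rw [integral_rpow (Or.inl (by norm_num))]
    norm_num
    ring
  have hgval : (∫ s in t..T, g s) = C * (2 * (T - t) ^ ((1:ℝ)/2) + (T - t)) := by
    simp only [hg]
    rw [intervalIntegral.integral_const_mul,
      intervalIntegral.integral_add hrpow intervalIntegrable_const, hcomp]
    simp [mul_comm]
  -- final estimate
  have hTt1 : (1:ℝ) ≤ T - t := by linarith
  have hsq : (T - t) ^ ((1:ℝ)/2) ≤ T - t := by
    calc (T - t) ^ ((1:ℝ)/2) ≤ (T - t) ^ (1:ℝ) :=
          Real.rpow_le_rpow_of_exponent_le hTt1 (by norm_num)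
      _ = T - t := Real.rpow_one _
  calc (∫ s in t..T, 1 / ν s) ≤ ∫ s in t..T, g s := hmain
    _ = C * (2 * (T - t) ^ ((1:ℝ)/2) + (T - t)) := hgval
    _ ≤ 3 * C * (T - t) := by nlinarith
end

section
/- Let Q : ℝ → ℝ be differentiable with Q(x) ≤ Q* and |Q′(x)| ≤ Q₁* for all x ∈ ℝ, let α ≤ 0, let t ≤ s be real numbers, and let w : ℝ → ℝ be continuous. Define F : ℝ → ℝ by F(y) = exp( ∫_t^s Q( y·e^{α(u−t)} + w(u) ) du ). Then F is differentiable on ℝ and |F′(y)| ≤ (s−t)·Q₁*·e^{Q*(s−t)} for every y ∈ ℝ. -/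
theorem stmt_13 (Q : ℝ → ℝ) (Qs Q₁ : ℝ) (hQdiff : Differentiable ℝ Q)
    (hQbound : ∀ x : ℝ, Q x ≤ Qs) (hQ'bound : ∀ x : ℝ, |deriv Q x| ≤ Q₁)
    (α t s : ℝ) (hα : α ≤ 0) (hts : t ≤ s)
    (w : ℝ → ℝ) (hw : Continuous w)
    (F : ℝ → ℝ)
    (hF : ∀ y : ℝ, F y = Real.exp (∫ u in t..s, Q (y * Real.exp (α * (u - t)) + w u))) :
    Differentiable ℝ F ∧ ∀ y : ℝ, |deriv F y| ≤ (s - t) * Q₁ * Real.exp (Qs * (s - t)) := by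
  have hQ₁0 : 0 ≤ Q₁ := le_trans (abs_nonneg _) (hQ'bound 0)
  set g : ℝ → ℝ → ℝ := fun y u => Q (y * Real.exp (α * (u - t)) + w u) with hg
  set g' : ℝ → ℝ → ℝ :=
    fun y u => deriv Q (y * Real.exp (α * (u - t)) + w u) * Real.exp (α * (u - t)) with hg'
  have hcontin : ∀ y : ℝ, Continuous (fun u => y * Real.exp (α * (u - t)) + w u) := by
    intro y
    exact ((continuous_const.mul ((continuous_const.mul (continuous_id.sub continuous_const)).rexp)).add hw)
  have hcont : ∀ y : ℝ, Continuous (fun u => g y u) := fun y =>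
    hQdiff.continuous.comp (hcontin y)
  have hexp_le : ∀ u ∈ Set.uIoc t s, Real.exp (α * (u - t)) ≤ 1 := by
    intro u hu
    rw [Set.uIoc_of_le hts] at hu
    have : α * (u - t) ≤ 0 := mul_nonpos_of_nonpos_of_nonneg hα (by linarith [hu.1])
    exact Real.exp_le_one_iff.2 this
  have hbnd : ∀ y : ℝ, ∀ u ∈ Set.uIoc t s, ‖g' y u‖ ≤ Q₁ := by
    intro y u hu
    have h1 : |deriv Q (y * Real.exp (α * (u - t)) + w u)| ≤ Q₁ := hQ'bound _
    have h2 : Real.exp (α * (u - t)) ≤ 1 := hexp_le u hu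
    have h2' : (0:ℝ) ≤ Real.exp (α * (u - t)) := (Real.exp_pos _).le
    calc ‖g' y u‖ = |deriv Q (y * Real.exp (α * (u - t)) + w u)| * Real.exp (α * (u - t)) := by
          rw [Real.norm_eq_abs, abs_mul, abs_of_nonneg h2']
      _ ≤ Q₁ * 1 := mul_le_mul h1 h2 h2' hQ₁0
      _ = Q₁ := mul_one _
  have hdiff_pt : ∀ (u : ℝ) (x : ℝ), HasDerivAt (fun y => g y u) (g' x u) x := by
    intro u x
    have h1 : HasDerivAt (fun y : ℝ => y * Real.exp (α * (u - t)) + w u)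
        (Real.exp (α * (u - t))) x := by
      simpa using ((hasDerivAt_id x).mul_const (Real.exp (α * (u - t)))).add_const (w u)
    simpa [hg, hg', Function.comp_def] using ((hQdiff _).hasDerivAt.comp x h1)
  have key : ∀ y₀ : ℝ, HasDerivAt (fun y => ∫ u in t..s, g y u) (∫ u in t..s, g' y₀ u) y₀ := by
    intro y₀
    have h := intervalIntegral.hasDerivAt_integral_of_dominated_loc_of_deriv_le
      (μ := MeasureTheory.volume) (F := g) (F' := g') (x₀ := y₀) (a := t) (b := s)
      (bound := fun _ => Q₁) (s := Metric.ball y₀ 1) (Metric.ball_mem_nhds y₀ one_pos)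
      (Filter.Eventually.of_forall fun y => (hcont y).aestronglyMeasurable)
      ((hcont y₀).intervalIntegrable t s)
      (((measurable_deriv Q).comp (hcontin y₀).measurable).mul
        ((continuous_const.mul (continuous_id.sub continuous_const)).rexp).measurable).aestronglyMeasurable
      (Filter.Eventually.of_forall (fun u hu x _ => hbnd x u hu))
      intervalIntegrable_const
      (Filter.Eventually.of_forall (fun u _ x _ => hdiff_pt u x))
    exact h.2
  have hFeq : F = fun y => Real.exp (∫ u in t..s, g y u) := funext hF
  have hFDeriv : ∀ y : ℝ, HasDerivAt F
      (Real.exp (∫ u in t..s, g y u) * ∫ u in t..s, g' y u) y := by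
    intro y
    rw [hFeq]
    exact (key y).exp
  refine ⟨fun y => (hFDeriv y).differentiableAt, fun y => ?_⟩
  rw [(hFDeriv y).deriv]
  have hIbound : |∫ u in t..s, g' y u| ≤ Q₁ * |s - t| := by
    simpa using intervalIntegral.norm_integral_le_of_norm_le_const (C := Q₁)
      (f := fun u => g' y u) (hbnd y)
  have hHle : (∫ u in t..s, g y u) ≤ Qs * (s - t) := by
    have := intervalIntegral.integral_mono_on hts ((hcont y).intervalIntegrable t s)
      (intervalIntegrable_const (μ := MeasureTheory.volume) (c := Qs)) (fun u _ => hQbound _)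
    simpa [intervalIntegral.integral_const, smul_eq_mul, mul_comm] using this
  have hexpb : Real.exp (∫ u in t..s, g y u) ≤ Real.exp (Qs * (s - t)) :=
    Real.exp_le_exp.2 hHle
  have hst : |s - t| = s - t := abs_of_nonneg (by linarith)
  rw [abs_mul, abs_of_nonneg (Real.exp_pos _).le]
  calc Real.exp (∫ u in t..s, g y u) * |∫ u in t..s, g' y u|
      ≤ Real.exp (Qs * (s - t)) * (Q₁ * (s - t)) := by
        apply mul_le_mul hexpb (by rw [← hst]; exact hIbound) (abs_nonneg _) (Real.exp_pos _).le
    _ = (s - t) * Q₁ * Real.exp (Qs * (s - t)) := by ring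
end

section
/- Let f : ℝ → ℝ be a bounded measurable function and let v > 0. Then the map m ↦ ∫ f(z) d(gaussianReal m v)(z) is differentiable on ℝ, and its derivative at any m₀ ∈ ℝ equals ∫ f(z)·(z − m₀)/v d(gaussianReal m₀ v)(z), where gaussianReal m v denotes the Gaussian measure on ℝ with mean m and variance v. -/
open ProbabilityTheory MeasureTheory Real

lemma my_integral_gaussianReal_eq (g : ℝ → ℝ) (m : ℝ) (v : NNReal) (hv : v ≠ 0) :
    ∫ z, g z ∂(gaussianReal m v) = ∫ z, gaussianPDFReal m v z * g z := by
  rw [gaussianReal_of_var_ne_zero _ hv]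
  have h : (gaussianPDF m v)
      = fun x => ((Real.toNNReal (gaussianPDFReal m v x) : NNReal) : ENNReal) := rfl
  rw [h, integral_withDensity_eq_integral_smul
      ((measurable_gaussianPDFReal m v).real_toNNReal) g]
  congr 1
  ext x
  rw [NNReal.smul_def, Real.coe_toNNReal _ (gaussianPDFReal_nonneg m v x), smul_eq_mul]

lemma my_hasDerivAt_gaussianPDFReal (v : NNReal) (hv : 0 < v) (z m : ℝ) :
    HasDerivAt (fun m => gaussianPDFReal m v z)
      (gaussianPDFReal m v z * ((z - m) / v)) m := by
  have hv' : (v : ℝ) ≠ 0 := ne_of_gt (by exact_mod_cast hv)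
  have h0 : HasDerivAt (fun m : ℝ => z - m) (-1) m := (hasDerivAt_id m).const_sub z
  have h1 : HasDerivAt (fun m : ℝ => -(z - m) ^ 2 / (2 * (v : ℝ)))
      (-(2 * (z - m) ^ 1 * (-1)) / (2 * (v : ℝ))) m := ((h0.pow 2).neg).div_const _
  have h2 := (h1.exp).const_mul ((Real.sqrt (2 * π * v))⁻¹)
  have heq : gaussianPDFReal m v z * ((z - m) / (v : ℝ))
      = (Real.sqrt (2 * π * v))⁻¹ *
        (Real.exp (-(z - m) ^ 2 / (2 * (v : ℝ))) * (-(2 * (z - m) ^ 1 * -1) / (2 * (v : ℝ)))) := by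
    unfold gaussianPDFReal
    field_simp
  rw [heq]
  exact h2

theorem stmt_17 (f : ℝ → ℝ) (hf : Measurable f) (C : ℝ) (hbound : ∀ x : ℝ, |f x| ≤ C)
    (v : NNReal) (hv : 0 < v) (m₀ : ℝ) :
    HasDerivAt (fun m : ℝ => ∫ z, f z ∂(gaussianReal m v))
      (∫ z, f z * (z - m₀) / (v : ℝ) ∂(gaussianReal m₀ v)) m₀ := by
  have hv' : (0 : ℝ) < (v : ℝ) := by exact_mod_cast hv
  have hC : 0 ≤ C := le_trans (abs_nonneg _) (hbound 0)
  set b : ℝ := 1 / (4 * (v : ℝ)) with hb_def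
  have hb : 0 < b := by positivity
  set K : ℝ := (Real.sqrt (2 * π * v))⁻¹ * Real.exp (1 / (2 * (v : ℝ))) / (v : ℝ) with hK_def
  have hK : 0 ≤ K := by positivity
  set bound : ℝ → ℝ := fun z => C * K * ((|z - m₀| + 1) * Real.exp (-b * (z - m₀) ^ 2))
    with hbound_def
  have hpdf_meas : ∀ m : ℝ, Measurable (fun z => gaussianPDFReal m v z * f z) :=
    fun m => (measurable_gaussianPDFReal m v).mul hf
  -- key pointwise bound
  have key_bound : ∀ z : ℝ, ∀ m ∈ Metric.ball m₀ 1,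
      ‖gaussianPDFReal m v z * ((z - m) / (v : ℝ)) * f z‖ ≤ bound z := by
    intro z m hm
    have hd : |m - m₀| < 1 := by simpa [Real.dist_eq] using hm
    have e1 : Real.exp (-(z - m) ^ 2 / (2 * (v : ℝ)))
        ≤ Real.exp (1 / (2 * (v : ℝ))) * Real.exp (-b * (z - m₀) ^ 2) := by
      rw [← Real.exp_add]
      apply Real.exp_le_exp.mpr
      have h1 : (z - m₀) ^ 2 / 2 - 1 ≤ (z - m) ^ 2 := by
        nlinarith [sq_nonneg (z - m₀ - 2 * (m - m₀)), sq_nonneg (m - m₀), abs_nonneg (m - m₀),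
          sq_abs (m - m₀), (abs_le.mp hd.le).1, (abs_le.mp hd.le).2]
      rw [hb_def, div_le_iff₀ (by positivity : (0:ℝ) < 2 * (v : ℝ))]
      have hexp : (1 / (2 * (v : ℝ)) + -(1 / (4 * (v : ℝ))) * (z - m₀) ^ 2) * (2 * (v : ℝ))
          = 1 - (z - m₀) ^ 2 / 2 := by field_simp; ring
      rw [hexp]
      linarith
    have habs : |z - m| ≤ |z - m₀| + 1 := by
      calc |z - m| ≤ |z - m₀| + |m₀ - m| := abs_sub_le z m₀ m
        _ ≤ |z - m₀| + 1 := by have h := abs_sub_comm m₀ m; linarith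
    have hpdf_nonneg := gaussianPDFReal_nonneg m v z
    have step1 : ‖gaussianPDFReal m v z * ((z - m) / (v : ℝ)) * f z‖
        = gaussianPDFReal m v z * (|z - m| / (v : ℝ)) * |f z| := by
      rw [Real.norm_eq_abs, abs_mul, abs_mul, abs_div, abs_of_nonneg hpdf_nonneg,
        abs_of_pos hv']
    rw [step1]
    have hpdf_le : gaussianPDFReal m v z
        ≤ (Real.sqrt (2 * π * v))⁻¹ *
          (Real.exp (1 / (2 * (v : ℝ))) * Real.exp (-b * (z - m₀) ^ 2)) := by
      unfold gaussianPDFReal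
      have : (0:ℝ) ≤ (Real.sqrt (2 * π * v))⁻¹ := by positivity
      exact mul_le_mul_of_nonneg_left e1 this
    calc gaussianPDFReal m v z * (|z - m| / (v : ℝ)) * |f z|
        ≤ ((Real.sqrt (2 * π * v))⁻¹ *
            (Real.exp (1 / (2 * (v : ℝ))) * Real.exp (-b * (z - m₀) ^ 2)))
          * ((|z - m₀| + 1) / (v : ℝ)) * C := by
          apply mul_le_mul
          · apply mul_le_mul hpdf_le
            · gcongr
            · positivity
            · positivity
          · exact hbound z
          · positivity
          · positivity
      _ = bound z := by rw [hbound_def, hK_def]; field_simp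
  -- integrability of the bound
  have bound_int : Integrable bound := by
    have h1 : Integrable (fun x : ℝ => |x| * Real.exp (-b * x ^ 2)) := by
      have := (integrable_mul_exp_neg_mul_sq hb).abs
      simpa [abs_mul, abs_of_pos (Real.exp_pos _)] using this
    have h2 : Integrable (fun x : ℝ => Real.exp (-b * x ^ 2)) := integrable_exp_neg_mul_sq hb
    have base : Integrable (fun x : ℝ => (|x| + 1) * Real.exp (-b * x ^ 2)) := by
      have := h1.add h2
      refine this.congr (Filter.Eventually.of_forall fun x => ?_)
      simp only [Pi.add_apply]; ring
    exact ((base.comp_sub_right m₀).const_mul (C * K))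
  have key := hasDerivAt_integral_of_dominated_loc_of_deriv_le
    (μ := volume) (x₀ := m₀) (s := Metric.ball m₀ 1)
    (F := fun m z => gaussianPDFReal m v z * f z)
    (F' := fun m z => gaussianPDFReal m v z * ((z - m) / (v : ℝ)) * f z)
    (bound := bound) (Metric.ball_mem_nhds m₀ one_pos)
    (Filter.Eventually.of_forall fun m => (hpdf_meas m).aestronglyMeasurable)
    (by
      apply Integrable.mono' ((integrable_gaussianPDFReal m₀ v).mul_const C)
        (hpdf_meas m₀).aestronglyMeasurable
      refine Filter.Eventually.of_forall fun z => ?_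
      rw [Real.norm_eq_abs, abs_mul, abs_of_nonneg (gaussianPDFReal_nonneg m₀ v z)]
      exact mul_le_mul_of_nonneg_left (hbound z) (gaussianPDFReal_nonneg m₀ v z))
    (((((measurable_gaussianPDFReal m₀ v).mul
        ((measurable_id.sub measurable_const).div_const _)).mul hf)).aestronglyMeasurable)
    (Filter.Eventually.of_forall key_bound) bound_int
    (Filter.Eventually.of_forall fun z m hm =>
      (my_hasDerivAt_gaussianPDFReal v hv z m).mul_const (f z))
  have h1 : (fun m : ℝ => ∫ z, f z ∂(gaussianReal m v))
      = fun m : ℝ => ∫ z, gaussianPDFReal m v z * f z := by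
    funext m; exact my_integral_gaussianReal_eq f m v hv.ne'
  rw [h1, my_integral_gaussianReal_eq (fun z => f z * (z - m₀) / (v : ℝ)) m₀ v hv.ne']
  have h2 : (∫ z, gaussianPDFReal m₀ v z * (f z * (z - m₀) / (v : ℝ)))
      = ∫ z, gaussianPDFReal m₀ v z * ((z - m₀) / (v : ℝ)) * f z := by
    congr 1; funext z; ring
  rw [h2]
  exact key.2
end
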